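/- Let $R/S$ be a ring extension and let $I$ be an $R$-bimodule equipped with an associative multiplication $I \times I \to I$ compatible with the bimodule structure (a multiplicative $R$-bimodule), so that $A = R \oplus I$ and $T = S \oplus I$ are rings with multiplication $(r, i)(r', i') = (rr', ri' + ir' + ii')$. Then $R/S$ is a separable extension if and only if $A/T$ is a separable extension. -/

import Mathlib

/-- Separability of the ring extension `A / S`, for a subring `S` of `A`,
expressed via a Casimir (separability) element `e = ∑ᵢ xᵢ ⊗ yᵢ ∈ A ⊗_S A`:
`∑ᵢ xᵢ yᵢ = 1`, and `S`-centrality (`r • e = e • r` in `A ⊗_S A`) is encoded by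
evaluating against all `S`-balanced biadditive maps (these detect equality in
the tensor product `A ⊗_S A`). -/
def IsSeparableExtension {A : Type*} [Ring A] (S : Subring A) : Prop :=
  ∃ (n : ℕ) (x y : Fin n → A),
    (∑ i, x i * y i) = 1 ∧
    ∀ (Z : Type*) [AddCommGroup Z] (b : A →+ A →+ Z),
      (∀ (s : S) (a c : A), b (a * s) c = b a (s * c)) →
      ∀ r : A, (∑ i, b (r * x i) (y i)) = ∑ i, b (x i) (y i * r)

theorem sep_balance_transfer {A : Type*} [Ring A] (S : Subring A) {n : ℕ} (x y : Fin n → A)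
    (h : ∀ (Z : Type v) [AddCommGroup Z] (b : A →+ A →+ Z),
      (∀ (s : S) (a c : A), b (a * s) c = b a (s * c)) →
      ∀ r : A, (∑ i, b (r * x i) (y i)) = ∑ i, b (x i) (y i * r)) :
    ∀ (Z : Type w) [AddCommGroup Z] (b : A →+ A →+ Z),
      (∀ (s : S) (a c : A), b (a * s) c = b a (s * c)) →
      ∀ r : A, (∑ i, b (r * x i) (y i)) = ∑ i, b (x i) (y i * r) := by
  intro Z _ b hb r
  rw [← sub_eq_zero]
  apply CharacterModule.eq_zero_of_character_apply
  intro φ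
  let ψ : Z →+ AddCircle (1 : ℚ) := φ
  let e : ULift.{v} (AddCircle (1 : ℚ)) ≃+ AddCircle (1 : ℚ) := AddEquiv.ulift
  let b' : A →+ A →+ ULift.{v} (AddCircle (1 : ℚ)) :=
    { toFun := fun a => e.symm.toAddMonoidHom.comp (ψ.comp (b a))
      map_zero' := by ext c; simp
      map_add' := by intro u v; ext c; simp }
  have hb' : ∀ (s : S) (a c : A), b' (a * s) c = b' a (s * c) := by
    intro s a c
    show e.symm (ψ (b (a * s) c)) = e.symm (ψ (b a (s * c)))
    rw [hb]
  have key := h _ b' hb' r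
  have key2 := congrArg e key
  rw [map_sum, map_sum] at key2
  have key3 : (∑ i, ψ (b (r * x i) (y i))) = ∑ i, ψ (b (x i) (y i * r)) := by
    have eL : ∀ i : Fin n, e (b' (r * x i) (y i)) = ψ (b (r * x i) (y i)) := fun i =>
      e.apply_symm_apply _
    have eR : ∀ i : Fin n, e (b' (x i) (y i * r)) = ψ (b (x i) (y i * r)) := fun i =>
      e.apply_symm_apply _
    calc (∑ i, ψ (b (r * x i) (y i))) = ∑ i, e (b' (r * x i) (y i)) :=
          Finset.sum_congr rfl fun i _ => (eL i).symm
      _ = ∑ i, e (b' (x i) (y i * r)) := key2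
      _ = ∑ i, ψ (b (x i) (y i * r)) := Finset.sum_congr rfl fun i _ => eR i
  show ψ _ = 0
  rw [map_sub, map_sum, map_sum, key3, sub_self]


/-- Let `R/S` be a ring extension and `I` a multiplicative `R`-bimodule, so that
`A = R ⊕ I` is a ring containing `T = S ⊕ I`.  (Equivalently, and as encoded here:
`A` is a ring, `R` a subring, `I` a two-sided ideal with `A = R ⊕ I` as additive
groups, `S ≤ R` a subring, and `T = S + I`.)  Then `R/S` is a separable extension
if and only if `A/T` is a separable extension. -/
theorem biseparable_stmt3 {A : Type*} [Ring A] (R : Subring A) (I : TwoSidedIdeal A)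
    (hdisj : ∀ x : A, x ∈ R → x ∈ I → x = 0)
    (hspan : ∀ a : A, ∃ r ∈ R, ∃ i ∈ I, a = r + i)
    (S : Subring A) (hSR : S ≤ R)
    (T : Subring A) (hT : ∀ a : A, a ∈ T ↔ ∃ s ∈ S, ∃ i ∈ I, a = s + i) :
    IsSeparableExtension (S.comap R.subtype) ↔ IsSeparableExtension T := by
  classical
  choose ρ hρR ι hιI heq using hspan
  have hsub : ∀ a : A, a - ρ a ∈ I := by
    intro a
    have : a - ρ a = ι a := by nth_rewrite 1 [heq a]; abel
    rw [this]; exact hιI a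
  have huniq : ∀ a r : A, r ∈ R → a - r ∈ I → ρ a = r := by
    intro a r hr hi
    have h2 : ρ a - r ∈ I := by
      have e : ρ a - r = (a - r) - (a - ρ a) := by abel
      rw [e]; exact I.sub_mem hi (hsub a)
    exact sub_eq_zero.mp (hdisj _ (sub_mem (hρR a) hr) h2)
  have hρmem : ∀ r ∈ R, ρ r = r := fun r hr =>
    huniq r r hr (by simpa using I.zero_mem)
  have hadd : ∀ a b : A, ρ (a + b) = ρ a + ρ b := by
    intro a b
    refine huniq _ _ (add_mem (hρR a) (hρR b)) ?_
    have e : (a + b) - (ρ a + ρ b) = (a - ρ a) + (b - ρ b) := by abel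
    rw [e]; exact I.add_mem (hsub a) (hsub b)
  have hmul : ∀ a b : A, ρ (a * b) = ρ a * ρ b := by
    intro a b
    refine huniq _ _ (mul_mem (hρR a) (hρR b)) ?_
    have e : a * b - ρ a * ρ b = (a - ρ a) * b + ρ a * (b - ρ b) := by noncomm_ring
    rw [e]; exact I.add_mem (I.mul_mem_right _ _ (hsub a)) (I.mul_mem_left _ _ (hsub b))
  have hone : ρ 1 = 1 := hρmem 1 R.one_mem
  have hIT : ∀ j ∈ I, j ∈ T := fun j hj => (hT j).2 ⟨0, S.zero_mem, j, hj, (zero_add j).symm⟩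
  have hST : ∀ s ∈ S, s ∈ T := fun s hs => (hT s).2 ⟨s, hs, 0, I.zero_mem, (add_zero s).symm⟩
  constructor
  · -- R/S separable → A/T separable
    rintro ⟨n, x, y, hsum, hbal⟩
    have hsum' : (∑ i, (x i : A) * (y i : A)) = 1 := by
      have := congrArg (Subtype.val) hsum
      push_cast at this
      simpa using this
    refine ⟨n, fun i => (x i : A), fun i => (y i : A), hsum', ?_⟩
    intro Z _ b hb a
    have hbal' := sep_balance_transfer (S.comap R.subtype) x y hbal
    -- restriction of b to R
    set B : ↥R →+ ↥R →+ Z :=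
      { toFun := fun u =>
        { toFun := fun v => b u v
          map_zero' := by simp
          map_add' := by intro v w; push_cast; simp }
        map_zero' := by ext v; simp
        map_add' := by intro u u'; ext v; push_cast; simp } with hBdef
    have hBbal : ∀ (s : ↥(S.comap R.subtype)) (u v : ↥R), B (u * s) v = B u (s * v) := by
      intro s u v
      have hsT : (((s : ↥R) : A)) ∈ T := hST _ s.2
      have := hb ⟨((s : ↥R) : A), hsT⟩ u v
      simpa [hBdef] using this
    set r0 := ρ a with hr0
    have hr0R : r0 ∈ R := hρR a
    have key := hbal' Z B hBbal ⟨r0, hr0R⟩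
    simp only [hBdef, AddMonoidHom.coe_mk, ZeroHom.coe_mk] at key
    push_cast at key
    -- decompose a
    have hjI : a - r0 ∈ I := hsub a
    set j := a - r0 with hj
    have hja : a = r0 + j := by rw [hj]; abel
    have hsplitL : ∀ i, b (a * (x i : A)) (y i) =
        b (r0 * x i) (y i) + b (j * x i) (y i) := by
      intro i
      conv_lhs => rw [hja]
      simp [add_mul, map_add]
    have hsplitR : ∀ i, b (x i) ((y i : A) * a) =
        b (x i) (y i * r0) + b (x i) (y i * j) := by
      intro i
      conv_lhs => rw [hja]
      simp [mul_add, map_add]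
    -- j-parts
    have hjL : ∀ i : Fin n, b (j * (x i : A)) (y i) = b 1 ((j * x i) * y i) := by
      intro i
      have hmem : j * (x i : A) ∈ T := hIT _ (I.mul_mem_right _ _ hjI)
      have := hb ⟨j * (x i : A), hmem⟩ 1 (y i)
      simpa using this
    have hjR : ∀ i : Fin n, b (x i) ((y i : A) * j) = b ((x i : A) * (y i * j)) 1 := by
      intro i
      have hmem : (y i : A) * j ∈ T := hIT _ (I.mul_mem_left _ _ hjI)
      have := hb ⟨(y i : A) * j, hmem⟩ (x i) 1
      simpa using this.symm
    have hsumL0 : (∑ i, (j * (x i : A)) * y i) = j := by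
      calc ∑ i, (j * (x i : A)) * y i = j * ∑ i, (x i : A) * y i := by
            rw [Finset.mul_sum]; exact Finset.sum_congr rfl fun i _ => (mul_assoc _ _ _)
        _ = j := by rw [hsum', mul_one]
    have hsumR0 : (∑ i, (x i : A) * ((y i : A) * j)) = j := by
      calc ∑ i, (x i : A) * ((y i : A) * j) = (∑ i, (x i : A) * y i) * j := by
            rw [Finset.sum_mul]; exact Finset.sum_congr rfl fun i _ => (mul_assoc _ _ _).symm
        _ = j := by rw [hsum', one_mul]
    have hjsumL : (∑ i, b (j * (x i : A)) (y i)) = b 1 j := by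
      calc (∑ i, b (j * (x i : A)) (y i))
          = ∑ i, b 1 ((j * x i) * y i) := Finset.sum_congr rfl fun i _ => hjL i
        _ = b 1 (∑ i, (j * (x i : A)) * y i) := (map_sum _ _ _).symm
        _ = b 1 j := by rw [hsumL0]
    have hjsumR : (∑ i, b (x i) ((y i : A) * j)) = b 1 j := by
      calc (∑ i, b (x i) ((y i : A) * j))
          = ∑ i, b ((x i : A) * ((y i : A) * j)) 1 := Finset.sum_congr rfl fun i _ => hjR i
        _ = (∑ i, b ((x i : A) * ((y i : A) * j))) 1 :=
            (AddMonoidHom.finset_sum_apply _ _ _).symm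
        _ = b (∑ i, (x i : A) * ((y i : A) * j)) 1 := by rw [← map_sum]
        _ = b j 1 := by rw [hsumR0]
        _ = b 1 j := by
            have := hb ⟨j, hIT _ hjI⟩ 1 1
            simpa using this
    calc ∑ i, b (a * (x i : A)) (y i)
        = (∑ i, b (r0 * (x i : A)) (y i)) + ∑ i, b (j * (x i : A)) (y i) := by
          rw [← Finset.sum_add_distrib]
          exact Finset.sum_congr rfl fun i _ => hsplitL i
      _ = (∑ i, b ((x i : A)) (y i * r0)) + b 1 j := by rw [key, hjsumL]
      _ = (∑ i, b ((x i : A)) (y i * r0)) + ∑ i, b (x i) ((y i : A) * j) := by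
          rw [hjsumR]
      _ = ∑ i, b (x i) ((y i : A) * a) := by
          rw [← Finset.sum_add_distrib]
          exact (Finset.sum_congr rfl fun i _ => (hsplitR i).symm)
  · -- A/T separable → R/S separable
    rintro ⟨n, x, y, hsum, hbal⟩
    set ρR : A →+ ↥R := AddMonoidHom.mk' (fun a => ⟨ρ a, hρR a⟩)
      (fun a b => Subtype.ext (hadd a b)) with hρRdef
    refine ⟨n, fun i => ρR (x i), fun i => ρR (y i), ?_, ?_⟩
    · apply Subtype.ext
      push_cast
      calc (∑ i, ρ (x i) * ρ (y i)) = ∑ i, ρ (x i * y i) :=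
            Finset.sum_congr rfl fun i _ => (hmul _ _).symm
        _ = ρ (∑ i, x i * y i) := (map_sum (AddMonoidHom.mk' ρ hadd) _ _).symm
        _ = 1 := by rw [hsum]; exact hone
    · intro Z _ b hb r
      set bt : A →+ A →+ Z :=
        { toFun := fun a => (b (ρR a)).comp ρR
          map_zero' := by ext c; simp
          map_add' := by intro u v; ext c; simp } with hbtdef
      have hbtbal : ∀ (t : ↥T) (a c : A), bt (a * t) c = bt a (t * c) := by
        intro t a c
        obtain ⟨s, hs, j, hj, hts⟩ := (hT (t : A)).1 t.2
        have hρt : ρ (t : A) = s := huniq _ _ (hSR hs) (by rw [hts]; simpa)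
        show b (ρR (a * t)) (ρR c) = b (ρR a) (ρR (t * c))
        have h1 : ρR (a * (t : A)) = ρR a * ⟨s, hSR hs⟩ :=
          Subtype.ext (by simpa [hρt, hρRdef] using hmul a t)
        have h2 : ρR ((t : A) * c) = (⟨s, hSR hs⟩ : ↥R) * ρR c :=
          Subtype.ext (by simpa [hρt, hρRdef] using hmul (t : A) c)
        rw [h1, h2]
        exact hb ⟨⟨s, hSR hs⟩, by simpa [Subring.mem_comap] using hs⟩ _ _
      have key := sep_balance_transfer T x y hbal Z bt hbtbal (r : A)
      have hconvL : ∀ i, bt ((r : A) * x i) (y i) = b (r * ρR (x i)) (ρR (y i)) := by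
        intro i
        show b (ρR ((r : A) * x i)) (ρR (y i)) = _
        have harg : ρR ((r : A) * x i) = r * ρR (x i) := by
          apply Subtype.ext
          show ρ ((r : A) * x i) = (r : A) * ρ (x i)
          rw [hmul, hρmem _ r.2]
        rw [harg]
      have hconvR : ∀ i, bt (x i) (y i * (r : A)) = b (ρR (x i)) (ρR (y i) * r) := by
        intro i
        show b (ρR (x i)) (ρR (y i * (r : A))) = _
        have harg : ρR (y i * (r : A)) = ρR (y i) * r := by
          apply Subtype.ext
          show ρ (y i * (r : A)) = ρ (y i) * (r : A)
          rw [hmul, hρmem _ r.2]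
        rw [harg]
      calc ∑ i, b (r * ρR (x i)) (ρR (y i))
          = ∑ i, bt ((r : A) * x i) (y i) :=
            Finset.sum_congr rfl fun i _ => (hconvL i).symm
        _ = ∑ i, bt (x i) (y i * (r : A)) := key
        _ = ∑ i, b (ρR (x i)) (ρR (y i) * r) :=
            Finset.sum_congr rfl fun i _ => hconvR i
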